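/- Let ω > 0, γ, D_pp, D_qq, D_pq be real constants and let 𝓛 be the dual Lindbladian (with zero perturbation potential) acting on operators on C_c^∞(ℝ,ℂ). Then for every polynomial f with real coefficients and every u ∈ C_c^∞(ℝ,ℂ), 𝓛(f(p))u = [ −(ω²/2)(q f′(p) + f′(p) q) − 2γ p f′(p) + D_pp f″(p) ] u, where f(p) denotes the constant-coefficient differential operator obtained by substituting p for the variable of f. -/

import Mathlib

open MeasureTheory Complex
open scoped ComplexOrder

noncomputable section

/-- Operators acting on complex-valued functions on `ℝ`. -/
abbrev Op : Type := (ℝ → ℂ) → (ℝ → ℂ)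

/-- The momentum operator `(p u)(x) = -i u'(x)`. -/
def pOp : Op := fun u x => -Complex.I * deriv u x

/-- The position operator `(q u)(x) = x * u(x)`. -/
def qOp : Op := fun u x => (x : ℂ) * u x

/-- Multiplication operator by a real-valued function. -/
def mulOp (f : ℝ → ℝ) : Op := fun u x => (f x : ℂ) * u x

/-- Commutator of two operators. -/
def opComm (A B : Op) : Op := fun u => A (B u) - B (A u)

/-- Anticommutator of two operators. -/
def opACom (A B : Op) : Op := fun u => A (B u) + B (A u)

/-- The `L²(ℝ,ℂ)` inner product, antilinear in the first argument. -/
def ip (u v : ℝ → ℂ) : ℂ := ∫ x : ℝ, (starRingEnd ℂ) (u x) * v x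

/-- `u ∈ C_c^∞(ℝ,ℂ)`: smooth and compactly supported. -/
def IsTest (u : ℝ → ℂ) : Prop := ContDiff ℝ (⊤ : ℕ∞) u ∧ HasCompactSupport u

/-- The dual Lindbladian (zero perturbation potential):
`𝓛(A) = (i/2)[p² + ω² q², A] + iγ{p,[q,A]} − D_qq [p,[p,A]] − D_pp [q,[q,A]] + 2 D_pq [q,[p,A]]`. -/
def Lind (ω γ Dpp Dqq Dpq : ℝ) (A : Op) : Op :=
  (Complex.I / 2) • opComm (fun u => pOp (pOp u) + ((ω^2 : ℝ) : ℂ) • qOp (qOp u)) A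
  + (Complex.I * (γ : ℂ)) • opACom pOp (opComm qOp A)
  - (Dqq : ℂ) • opComm pOp (opComm pOp A)
  - (Dpp : ℂ) • opComm qOp (opComm qOp A)
  + ((2 * Dpq : ℝ) : ℂ) • opComm qOp (opComm pOp A)

/-- `f(p)` for a real polynomial `f`: the constant-coefficient differential operator
obtained by substituting `p` for the variable of `f`. -/
def polyOp (f : Polynomial ℝ) : Op := fun u => f.sum fun k a => (a : ℂ) • pOp^[k] u

local notation "Smooth" => ContDiff ℝ (⊤ : ℕ∞)

lemma smooth_diff {u : ℝ → ℂ} (hu : Smooth u) : Differentiable ℝ u :=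
  hu.differentiable (by simp)

lemma smoothSMul (c : ℂ) {u : ℝ → ℂ} (hu : Smooth u) : Smooth (c • u) :=
  hu.const_smul c

lemma hasDerivAt_ofReal' (x : ℝ) : HasDerivAt (fun y : ℝ => (y : ℂ)) 1 x := by
  simpa using (hasDerivAt_id x).ofReal_comp

lemma pOp_smooth {u : ℝ → ℂ} (hu : Smooth u) : Smooth (pOp u) := by
  have h := (contDiff_infty_iff_deriv.mp hu).2
  exact contDiff_const.mul h

lemma pOp_iter_smooth (n : ℕ) {u : ℝ → ℂ} (hu : Smooth u) : Smooth (pOp^[n] u) := by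
  induction n with
  | zero => exact hu
  | succ n ih => rw [Function.iterate_succ_apply']; exact pOp_smooth ih

lemma qOp_smooth {u : ℝ → ℂ} (hu : Smooth u) : Smooth (qOp u) :=
  Complex.ofRealCLM.contDiff.mul hu

lemma pOp_smul (c : ℂ) (v : ℝ → ℂ) : pOp (c • v) = c • pOp v := by
  funext x
  simp only [pOp, Pi.smul_apply, smul_eq_mul]
  rw [show deriv (c • v) x = deriv (fun y => c * v y) x from rfl, deriv_const_mul_field]
  ring

lemma pOp_add {v w : ℝ → ℂ} (hv : Differentiable ℝ v) (hw : Differentiable ℝ w) :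
    pOp (v + w) = pOp v + pOp w := by
  funext x
  simp only [pOp, Pi.add_apply]
  rw [deriv_add (hv x) (hw x)]
  ring

lemma pOp_zero : pOp (0 : ℝ → ℂ) = 0 := by
  funext x
  simp only [pOp, Pi.zero_apply]
  rw [show deriv (0 : ℝ → ℂ) x = deriv (fun _ : ℝ => (0 : ℂ)) x from rfl, deriv_const]
  ring

lemma qOp_smul (c : ℂ) (v : ℝ → ℂ) : qOp (c • v) = c • qOp v := by
  funext x; simp [qOp]; ring

lemma qOp_add (v w : ℝ → ℂ) : qOp (v + w) = qOp v + qOp w := by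
  funext x; simp [qOp]; ring

lemma qOp_zero : qOp (0 : ℝ → ℂ) = 0 := by
  funext x; simp [qOp]

lemma pOp_iter_smul (n : ℕ) (c : ℂ) (v : ℝ → ℂ) : pOp^[n] (c • v) = c • pOp^[n] v := by
  induction n with
  | zero => rfl
  | succ n ih =>
      rw [Function.iterate_succ_apply', ih, pOp_smul, ← Function.iterate_succ_apply' (f := pOp)]

lemma pOp_iter_add : ∀ (n : ℕ) {v w : ℝ → ℂ}, Smooth v → Smooth w →
    pOp^[n] (v + w) = pOp^[n] v + pOp^[n] w
  | 0, _, _, _, _ => rfl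
  | n + 1, v, w, hv, hw => by
      rw [Function.iterate_succ_apply, pOp_add (smooth_diff hv) (smooth_diff hw),
        pOp_iter_add n (pOp_smooth hv) (pOp_smooth hw),
        ← Function.iterate_succ_apply, ← Function.iterate_succ_apply]

lemma pOp_sum {ι : Type*} (s : Finset ι) (g : ι → ℝ → ℂ)
    (hg : ∀ i ∈ s, Differentiable ℝ (g i)) :
    pOp (∑ i ∈ s, g i) = ∑ i ∈ s, pOp (g i) := by
  funext x
  simp only [pOp, Finset.sum_apply]
  rw [
    deriv_sum (fun i hi => (hg i hi).differentiableAt), Finset.mul_sum]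

lemma polyOp_apply_eq (f : Polynomial ℝ) (u : ℝ → ℂ) :
    polyOp f u = ∑ k ∈ f.support, (f.coeff k : ℂ) • pOp^[k] u := rfl

lemma polyOp_smooth (f : Polynomial ℝ) {u : ℝ → ℂ} (hu : Smooth u) : Smooth (polyOp f u) := by
  rw [polyOp_apply_eq]
  have : (∑ k ∈ f.support, (f.coeff k : ℂ) • pOp^[k] u)
      = fun x => ∑ k ∈ f.support, (f.coeff k : ℂ) • pOp^[k] u x := by
    funext x; simp
  rw [this]
  exact ContDiff.sum fun k _ => (pOp_iter_smooth k hu).const_smul _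

lemma pOp_polyOp (f : Polynomial ℝ) {u : ℝ → ℂ} (hu : Smooth u) :
    pOp (polyOp f u) = polyOp f (pOp u) := by
  rw [polyOp_apply_eq, polyOp_apply_eq,
    pOp_sum f.support (fun k => (f.coeff k : ℂ) • pOp^[k] u)
      (fun k _ => smooth_diff (smoothSMul _ (pOp_iter_smooth k hu)))]
  refine Finset.sum_congr rfl fun k _ => ?_
  rw [pOp_smul, ← Function.iterate_succ_apply' (f := pOp), Function.iterate_succ_apply]

lemma polyOp_smul (f : Polynomial ℝ) (c : ℂ) (v : ℝ → ℂ) :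
    polyOp f (c • v) = c • polyOp f v := by
  rw [polyOp_apply_eq, polyOp_apply_eq, Finset.smul_sum]
  exact Finset.sum_congr rfl fun k _ => by rw [pOp_iter_smul, smul_comm]

lemma polyOp_add (f : Polynomial ℝ) {v w : ℝ → ℂ} (hv : Smooth v) (hw : Smooth w) :
    polyOp f (v + w) = polyOp f v + polyOp f w := by
  rw [polyOp_apply_eq, polyOp_apply_eq, polyOp_apply_eq, ← Finset.sum_add_distrib]
  exact Finset.sum_congr rfl fun k _ => by rw [pOp_iter_add k hv hw, smul_add]

lemma polyOp_poly_add (p q : Polynomial ℝ) (v : ℝ → ℂ) :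
    polyOp (p + q) v = polyOp p v + polyOp q v :=
  Polynomial.sum_add_index p q _ (fun i => by simp) (fun a b₁ b₂ => by
    push_cast; rw [add_smul])

lemma polyOp_monomial (n : ℕ) (a : ℝ) (v : ℝ → ℂ) :
    polyOp (Polynomial.monomial n a) v = (a : ℂ) • pOp^[n] v :=
  Polynomial.sum_monomial_index a _ (by simp)

lemma q_comm_p {u : ℝ → ℂ} (hu : Differentiable ℝ u) :
    qOp (pOp u) = pOp (qOp u) + Complex.I • u := by
  funext x
  have h1 : HasDerivAt (qOp u) ((1 : ℂ) * u x + (x : ℂ) * deriv u x) x :=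
    (hasDerivAt_ofReal' x).mul (hu x).hasDerivAt
  simp only [qOp, pOp, Pi.add_apply, Pi.smul_apply, smul_eq_mul, h1.deriv]
  ring

lemma q_comm_pow_succ : ∀ (n : ℕ) {u : ℝ → ℂ}, Smooth u →
    qOp (pOp^[n + 1] u) = pOp^[n + 1] (qOp u) + (Complex.I * ((n : ℂ) + 1)) • pOp^[n] u
  | 0, u, hu => by
      simpa using q_comm_p (smooth_diff hu)
  | n + 1, u, hu => by
      have hpu : Smooth (pOp u) := pOp_smooth hu
      rw [Function.iterate_succ_apply (f := pOp) (n := n + 1),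
        q_comm_pow_succ n hpu, q_comm_p (smooth_diff hu),
        pOp_iter_add (n + 1) (pOp_smooth (qOp_smooth hu)) (smoothSMul Complex.I hu),
        pOp_iter_smul, ← Function.iterate_succ_apply, ← Function.iterate_succ_apply]
      push_cast
      match_scalars <;> ring

lemma q_comm_pow (n : ℕ) {u : ℝ → ℂ} (hu : Smooth u) :
    qOp (pOp^[n] u) = pOp^[n] (qOp u) + (Complex.I * (n : ℂ)) • pOp^[n - 1] u := by
  cases n with
  | zero => simp
  | succ n => push_cast; simpa using q_comm_pow_succ n hu

lemma q_polyOp (f : Polynomial ℝ) {u : ℝ → ℂ} (hu : Smooth u) :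
    qOp (polyOp f u) = polyOp f (qOp u) + Complex.I • polyOp (Polynomial.derivative f) u := by
  induction f using Polynomial.induction_on' with
  | add p q hp hq =>
      rw [polyOp_poly_add, qOp_add, hp, hq, Polynomial.derivative_add, polyOp_poly_add,
        polyOp_poly_add, smul_add]
      abel
  | monomial n a =>
      rw [polyOp_monomial, polyOp_monomial, qOp_smul, q_comm_pow n hu,
        Polynomial.derivative_monomial, polyOp_monomial, smul_add, smul_smul, smul_smul]
      congr 1
      congr 1
      push_cast
      ring

theorem Lind_of_poly_p' (ω γ Dpp Dqq Dpq : ℝ) (hω : 0 < ω) (f : Polynomial ℝ)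
    (u : ℝ → ℂ) (hu : IsTest u) :
    Lind ω γ Dpp Dqq Dpq (polyOp f) u =
      (((-(ω^2/2) : ℝ) : ℂ) • (qOp ∘ polyOp (Polynomial.derivative f)
          + polyOp (Polynomial.derivative f) ∘ qOp)
        + ((-(2*γ) : ℝ) : ℂ) • (pOp ∘ polyOp (Polynomial.derivative f))
        + (Dpp : ℂ) • polyOp (Polynomial.derivative (Polynomial.derivative f))) u := by
  obtain ⟨hu', -⟩ := hu
  have hpu : Smooth (pOp u) := pOp_smooth hu'
  have hqu : Smooth (qOp u) := qOp_smooth hu'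
  have h1 : pOp (polyOp f u) = polyOp f (pOp u) := pOp_polyOp f hu'
  have h2 : pOp (polyOp f (pOp u)) = polyOp f (pOp (pOp u)) := pOp_polyOp f hpu
  have h3 : qOp (polyOp f u) = polyOp f (qOp u)
      + Complex.I • polyOp (Polynomial.derivative f) u := q_polyOp f hu'
  have h4 : qOp (polyOp f (qOp u)) = polyOp f (qOp (qOp u))
      + Complex.I • polyOp (Polynomial.derivative f) (qOp u) := q_polyOp f hqu
  have h5 : qOp (polyOp (Polynomial.derivative f) u)
      = polyOp (Polynomial.derivative f) (qOp u)
      + Complex.I • polyOp (Polynomial.derivative (Polynomial.derivative f)) u :=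
    q_polyOp (Polynomial.derivative f) hu'
  have h6 : pOp (polyOp (Polynomial.derivative f) u)
      = polyOp (Polynomial.derivative f) (pOp u) := pOp_polyOp (Polynomial.derivative f) hu'
  have h7 : qOp (polyOp f (pOp u)) = polyOp f (qOp (pOp u))
      + Complex.I • polyOp (Polynomial.derivative f) (pOp u) := q_polyOp f hpu
  have h8 : pOp (polyOp f (qOp u)) = polyOp f (pOp (qOp u)) := pOp_polyOp f hqu
  have hF : polyOp f (pOp (pOp u) + ((ω^2 : ℝ) : ℂ) • qOp (qOp u))
      = polyOp f (pOp (pOp u)) + ((ω^2 : ℝ) : ℂ) • polyOp f (qOp (qOp u)) := by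
    rw [polyOp_add f (pOp_smooth hpu) (smoothSMul _ (qOp_smooth hqu)), polyOp_smul]
  simp only [Lind, opComm, opACom, Pi.add_apply, Pi.sub_apply, Pi.smul_apply,
    Function.comp_apply]
  simp only [h3, h1, qOp_add, qOp_smul, pOp_smul, h4, h5, h2, h6, h7, h8, hF,
    add_sub_cancel_left, sub_self, pOp_zero, qOp_zero]
  have hI3 : Complex.I ^ 3 = -Complex.I := by rw [pow_succ, Complex.I_sq]; ring
  match_scalars <;> (push_cast; ring_nf; try simp only [hI3, Complex.I_sq]; try ring_nf; try ring)

/-- `𝓛(f(p)) = −(ω²/2)(q f′(p) + f′(p) q) − 2γ p f′(p) + D_pp f″(p)`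
on `C_c^∞(ℝ,ℂ)`. -/
theorem Lind_of_poly_p (ω γ Dpp Dqq Dpq : ℝ) (hω : 0 < ω) (f : Polynomial ℝ)
    (u : ℝ → ℂ) (hu : IsTest u) :
    Lind ω γ Dpp Dqq Dpq (polyOp f) u =
      (((-(ω^2/2) : ℝ) : ℂ) • (qOp ∘ polyOp (Polynomial.derivative f)
          + polyOp (Polynomial.derivative f) ∘ qOp)
        + ((-(2*γ) : ℝ) : ℂ) • (pOp ∘ polyOp (Polynomial.derivative f))
        + (Dpp : ℂ) • polyOp (Polynomial.derivative (Polynomial.derivative f))) u :=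
  Lind_of_poly_p' ω γ Dpp Dqq Dpq hω f u hu
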